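/- Consider the deterministic ansatz verification: suppose g^a, g^b, g^c, h^a, h^b, h^c are C¹ functions solving the six ODEs of the equilibrium system (with the stated terminal conditions), α is a C¹ function solving α' = −k^α α, and define ν̄(t) = g^a α + g^b Q̄ + g^c Q̄^B, ν^B(t) = h^a α + h^b Q̄ + h^c Q̄^B where Q̄' = ν̄, (Q̄^B)' = ν^B − ν̄ with Q̄(0) = Q̄^B(0) = 0. Then ν̄ and ν^B satisfy the coupled forward-backward ODEs −2η_I ν̄' = b ν^B + α − 2φ̄ Q̄ and −2η_B (ν^B)' = b ν̄ + α − 2φ_B Q̄^B on [0,T], with 2η_I ν̄(T) = −2ā Q̄(T) and 2η_B ν^B(T) = −(2a_B − b) Q̄^B(T). -/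

import Mathlib

/-- Deterministic verification of the linear ansatz for the mean-field FBSDE
system: if `g^a, g^b, g^c, h^a, h^b, h^c` solve the six equilibrium ODEs with
their terminal conditions, `α' = −k^α α`, and
`ν̄ = g^a α + g^b Q̄ + g^c Q̄^B`, `ν^B = h^a α + h^b Q̄ + h^c Q̄^B` with
`Q̄' = ν̄`, `(Q̄^B)' = ν^B − ν̄`, `Q̄(0) = Q̄^B(0) = 0`, then
`−2η_I ν̄' = b ν^B + α − 2φ̄ Q̄` and `−2η_B (ν^B)' = b ν̄ + α − 2φ_B Q̄^B` on
`[0,T]`, with `2η_I ν̄(T) = −2ā Q̄(T)` and `2η_B ν^B(T) = −(2a_B − b) Q̄^B(T)`. -/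
theorem stmt_18 (T b kα ηI ηB φbar φB abar aB : ℝ) (hT : 0 < T)
    (hb : 0 < b) (hkα : 0 < kα) (hηI : 0 < ηI) (hηB : 0 < ηB)
    (hφbar : 0 < φbar) (hφB : 0 < φB) (habar : 0 < abar) (haB : 0 < aB)
    (ga gb gc ha hb hc : ℝ → ℝ)
    (hga : ∀ t ∈ Set.Icc (0:ℝ) T, HasDerivWithinAt ga
      (-(-kα * ga t + gb t * ga t + gc t * (ha t - ga t) + (b * ha t + 1) / (2 * ηI)))
      (Set.Icc 0 T) t)
    (hha : ∀ t ∈ Set.Icc (0:ℝ) T, HasDerivWithinAt ha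
      (-(-kα * ha t + hb t * ga t + hc t * (ha t - ga t) + (b * ga t + 1) / (2 * ηB)))
      (Set.Icc 0 T) t)
    (hgb : ∀ t ∈ Set.Icc (0:ℝ) T, HasDerivWithinAt gb
      (-((gb t) ^ 2 + gc t * (hb t - gb t) + (b * hb t - 2 * φbar) / (2 * ηI)))
      (Set.Icc 0 T) t)
    (hhb : ∀ t ∈ Set.Icc (0:ℝ) T, HasDerivWithinAt hb
      (-(hb t * gb t + hc t * (hb t - gb t) + b * gb t / (2 * ηB)))
      (Set.Icc 0 T) t)
    (hgc : ∀ t ∈ Set.Icc (0:ℝ) T, HasDerivWithinAt gc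
      (-(gb t * gc t + gc t * (hc t - gc t) + b * hc t / (2 * ηI)))
      (Set.Icc 0 T) t)
    (hhc : ∀ t ∈ Set.Icc (0:ℝ) T, HasDerivWithinAt hc
      (-(hb t * gc t + hc t * (hc t - gc t) + (b * gc t - 2 * φB) / (2 * ηB)))
      (Set.Icc 0 T) t)
    (hgaT : ga T = 0) (hhaT : ha T = 0) (hgcT : gc T = 0) (hhbT : hb T = 0)
    (hgbT : gb T = -abar / ηI) (hhcT : hc T = -(2 * aB - b) / (2 * ηB))
    (α : ℝ → ℝ)
    (hα : ∀ t ∈ Set.Icc (0:ℝ) T, HasDerivWithinAt α (-kα * α t) (Set.Icc 0 T) t)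
    (Qbar QB νbar νB : ℝ → ℝ)
    (hνbar : ∀ t, νbar t = ga t * α t + gb t * Qbar t + gc t * QB t)
    (hνB : ∀ t, νB t = ha t * α t + hb t * Qbar t + hc t * QB t)
    (hQbar0 : Qbar 0 = 0) (hQB0 : QB 0 = 0)
    (hQbar : ∀ t ∈ Set.Icc (0:ℝ) T, HasDerivWithinAt Qbar (νbar t) (Set.Icc 0 T) t)
    (hQB : ∀ t ∈ Set.Icc (0:ℝ) T, HasDerivWithinAt QB (νB t - νbar t) (Set.Icc 0 T) t) :
    (∀ t ∈ Set.Icc (0:ℝ) T, HasDerivWithinAt νbar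
        (-((b * νB t + α t - 2 * φbar * Qbar t) / (2 * ηI))) (Set.Icc 0 T) t) ∧
    (∀ t ∈ Set.Icc (0:ℝ) T, HasDerivWithinAt νB
        (-((b * νbar t + α t - 2 * φB * QB t) / (2 * ηB))) (Set.Icc 0 T) t) ∧
    2 * ηI * νbar T = -2 * abar * Qbar T ∧
    2 * ηB * νB T = -(2 * aB - b) * QB T := by
  have hE : νbar = fun t => ga t * α t + gb t * Qbar t + gc t * QB t := funext hνbar
  have hE2 : νB = fun t => ha t * α t + hb t * Qbar t + hc t * QB t := funext hνB
  have hI : ηI ≠ 0 := ne_of_gt hηI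
  have hB : ηB ≠ 0 := ne_of_gt hηB
  refine ⟨?_, ?_, ?_, ?_⟩
  · intro t ht
    rw [hE]
    have h := (((hga t ht).mul (hα t ht)).add ((hgb t ht).mul (hQbar t ht))).add
      ((hgc t ht).mul (hQB t ht))
    refine h.congr_deriv ?_
    rw [hνbar t, hνB t]
    field_simp
    ring
  · intro t ht
    rw [hE2]
    have h := (((hha t ht).mul (hα t ht)).add ((hhb t ht).mul (hQbar t ht))).add
      ((hhc t ht).mul (hQB t ht))
    refine h.congr_deriv ?_
    rw [hνbar t, hνB t]
    field_simp
    ring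
  · rw [hνbar T, hgaT, hgbT, hgcT]
    field_simp
    ring
  · rw [hνB T, hhaT, hhbT, hhcT]
    field_simp
    ring
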